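/- Let X and Y be Banach spaces and T : X → Y a bounded linear operator. If there exists a bounded sequence (x_t) indexed by the Cantor tree 2^{<ω} in X such that for every branch σ ∈ 2^ℕ the sequence (T(x_{σ|n})) converges weak* in Y** to an element of Y** \ Y, and for every infinite antichain A of 2^{<ω} the sequence (T(x_t))_{t∈A} is weakly null, then the range of the dual operator T* : Y* → X* is not norm-separable. -/

import Mathlib

open Filter Topology NormedSpace

/-- Initial segment `σ|n` of a branch `σ ∈ 2^ℕ`. -/
def seg (σ : ℕ → Bool) (n : ℕ) : List Bool := List.ofFn (fun i : Fin n => σ i)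

/-- Two nodes of the Cantor tree `2^{<ω}` are incomparable. -/
def Incomp (s t : List Bool) : Prop := ¬ s <+: t ∧ ¬ t <+: s

lemma seg_length (σ : ℕ → Bool) (n : ℕ) : (seg σ n).length = n := by
  simp [seg]

lemma not_prefix_of_ne {σ σ' : ℕ → Bool} {p m m' : ℕ}
    (hp : σ p ≠ σ' p) (h1 : p < m) (h2 : p < m') : ¬ seg σ m <+: seg σ' m' := by
  intro hpre
  have hl : p < (seg σ m).length := by rwa [seg_length]
  have hl' : p < (seg σ' m').length := by rwa [seg_length]
  have := hpre.getElem hl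
  apply hp
  simpa [seg] using this

lemma incomp_of_ne {σ σ' : ℕ → Bool} {p m m' : ℕ}
    (hp : σ p ≠ σ' p) (h1 : p < m) (h2 : p < m') : Incomp (seg σ m) (seg σ' m') :=
  ⟨not_prefix_of_ne hp h1 h2, not_prefix_of_ne (Ne.symm hp) h2 h1⟩

lemma cantor_uncountable : ¬ (Set.univ : Set (ℕ → Bool)).Countable := by
  intro h
  have : Countable (ℕ → Bool) := Set.countable_univ_iff.mp h
  obtain ⟨f, hf⟩ := exists_surjective_nat (ℕ → Bool)
  obtain ⟨m, hm⟩ := hf (fun n => !(f n n))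
  have := congrFun hm m
  simp at this

/-- If a bounded sequence `(x_t)_{t ∈ 2^{<ω}}` in `X` is such that along every branch the
images `(T x_{σ|n})` converge weak* in `Y**` to an element outside `Y`, and along every
infinite antichain the images are weakly null, then the range of the dual operator
`T* : Y* → X*` is not norm-separable. -/
theorem dual_range_not_separable
    {X Y : Type*} [NormedAddCommGroup X] [NormedSpace ℝ X] [CompleteSpace X]
    [NormedAddCommGroup Y] [NormedSpace ℝ Y] [CompleteSpace Y]
    (T : X →L[ℝ] Y) (x : List Bool → X)
    (hbdd : ∃ C : ℝ, ∀ t, ‖x t‖ ≤ C)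
    (hbranch : ∀ σ : ℕ → Bool, ∃ y : StrongDual ℝ (StrongDual ℝ Y),
      y ∉ Set.range (inclusionInDoubleDual ℝ Y) ∧
      ∀ f : StrongDual ℝ Y, Tendsto (fun n => f (T (x (seg σ n)))) atTop (𝓝 (y f)))
    (hanti : ∀ t : ℕ → List Bool, Function.Injective t →
      (Pairwise fun i j => Incomp (t i) (t j)) →
      ∀ f : StrongDual ℝ Y, Tendsto (fun n => f (T (x (t n)))) atTop (𝓝 0)) :
    ¬ TopologicalSpace.IsSeparable
      {g : StrongDual ℝ X | ∃ f : StrongDual ℝ Y, g = f.comp T} := by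
  rintro ⟨c, hc, hsub⟩
  obtain ⟨C, hC⟩ := hbdd
  have hC0 : (0 : ℝ) ≤ C := (norm_nonneg _).trans (hC [])
  set ε : ℝ := 1 / (8 * (C + 1)) with hεdef
  have hεpos : 0 < ε := by positivity
  -- For each branch, rescale to get a functional whose values along the branch tend to 1.
  have key : ∀ σ : ℕ → Bool, ∃ f : StrongDual ℝ Y,
      Tendsto (fun n => f (T (x (seg σ n)))) atTop (𝓝 1) := by
    intro σ
    obtain ⟨y, hy, hlim⟩ := hbranch σ
    have hy0 : y ≠ 0 := by
      rintro rfl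
      exact hy ⟨0, map_zero _⟩
    obtain ⟨f, hf⟩ : ∃ f, y f ≠ 0 := by
      by_contra h
      push_neg at h
      exact hy0 (ContinuousLinearMap.ext fun f => by simp [h f])
    refine ⟨(y f)⁻¹ • f, ?_⟩
    have h2 := (hlim f).const_mul (y f)⁻¹
    rw [inv_mul_cancel₀ hf] at h2
    simpa [ContinuousLinearMap.smul_apply, smul_eq_mul] using h2
  choose F hF using key
  -- Each `T* (F σ)` lies in the closure of the countable set `c`.
  have hmem : ∀ σ, (F σ).comp T ∈ closure c := fun σ => hsub ⟨F σ, rfl⟩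
  have hnear : ∀ σ, ∃ g ∈ c, ‖(F σ).comp T - g‖ < ε := by
    intro σ
    obtain ⟨g, hg, hd⟩ := Metric.mem_closure_iff.1 (hmem σ) ε hεpos
    exact ⟨g, hg, by rwa [dist_eq_norm] at hd⟩
  choose G hGc hGd using hnear
  -- Pigeonhole: some fiber of `G` is infinite.
  obtain ⟨g, hfib⟩ : ∃ g, (G ⁻¹' {g}).Infinite := by
    by_contra h
    push_neg at h
    apply cantor_uncountable
    have hcov : (Set.univ : Set (ℕ → Bool)) ⊆ ⋃ g ∈ c, G ⁻¹' {g} := fun σ _ =>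
      Set.mem_biUnion (hGc σ) rfl
    exact Set.Countable.mono hcov (hc.biUnion fun g _ => (h g).countable)
  -- Extract an injective sequence in the fiber with a convergent subsequence.
  set S : Set (ℕ → Bool) := G ⁻¹' {g} with hSdef
  let e0 := Set.Infinite.natEmbedding S hfib
  have hu : ∀ n, (e0 n : ℕ → Bool) ∈ S := fun n => (e0 n).2
  have huinj : Function.Injective (fun n => (e0 n : ℕ → Bool)) :=
    Subtype.coe_injective.comp e0.injective
  obtain ⟨τ, φ, hφ, hv⟩ := CompactSpace.tendsto_subseq (fun n => (e0 n : ℕ → Bool))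
  set v : ℕ → (ℕ → Bool) := (fun n => (e0 n : ℕ → Bool)) ∘ φ with hvdef
  have hvS : ∀ k, v k ∈ S := fun k => hu (φ k)
  have hvinj : Function.Injective v := huinj.comp hφ.injective
  -- Cylinders are neighborhoods of τ.
  have hUn : ∀ n : ℕ, {σ : ℕ → Bool | ∀ i ≤ n, σ i = τ i} ∈ 𝓝 τ := by
    intro n
    have heq : {σ : ℕ → Bool | ∀ i ≤ n, σ i = τ i}
        = ⋂ i ∈ Finset.range (n + 1), (fun σ : ℕ → Bool => σ i) ⁻¹' {τ i} := by
      ext σ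
      simp [Nat.lt_succ_iff]
    rw [heq]
    refine (isOpen_biInter_finset fun i _ =>
      (continuous_apply i).isOpen_preimage _ (isOpen_discrete _)).mem_nhds ?_
    simp
  -- For each n, select σ ∈ S, σ ≠ τ, agreeing with τ up to n.
  have hsel : ∀ n : ℕ, ∃ σ, σ ∈ S ∧ σ ≠ τ ∧ ∀ i ≤ n, σ i = τ i := by
    intro n
    have hev : ∀ᶠ k in atTop, v k ∈ {σ : ℕ → Bool | ∀ i ≤ n, σ i = τ i} :=
      hv.eventually (hUn n)
    obtain ⟨K, hK⟩ := eventually_atTop.mp hev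
    by_cases hvK : v K = τ
    · refine ⟨v (K + 1), hvS _, ?_, hK _ (Nat.le_succ K)⟩
      intro hcon
      have := hvinj (hcon.trans hvK.symm)
      omega
    · exact ⟨v K, hvS _, hvK, hK _ le_rfl⟩
  choose sel hs1 hs2 hs3 using hsel
  -- Divergence points.
  have hex : ∀ n, ∃ m, sel n m ≠ τ m := by
    intro n
    by_contra h
    push_neg at h
    exact hs2 n (funext h)
  set d : ℕ → ℕ := fun n => Nat.find (hex n) with hddef
  have hd1 : ∀ n, sel n (d n) ≠ τ (d n) := fun n => Nat.find_spec (hex n)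
  have hd2 : ∀ n, ∀ i < d n, sel n i = τ i := fun n i hi =>
    not_ne_iff.mp (Nat.find_min (hex n) hi)
  have hd3 : ∀ n, n < d n := by
    intro n
    by_contra h
    push_neg at h
    exact hd1 n (hs3 n (d n) h)
  -- Subsequence with strictly increasing divergence points.
  set a : ℕ → ℕ := fun k => Nat.rec 0 (fun _ ih => d ih) k with hadef
  have ha : ∀ k, a (k + 1) = d (a k) := fun k => rfl
  set en : ℕ → ℕ := fun k => d (a k) with hendef
  have hemono : StrictMono en := by
    apply strictMono_nat_of_lt_succ
    intro k
    exact hd3 (en k)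
  set ρ : ℕ → (ℕ → Bool) := fun k => sel (a k) with hρdef
  have hρS : ∀ k, ρ k ∈ S := fun k => hs1 (a k)
  have hρd : ∀ k, ρ k (en k) ≠ τ (en k) := fun k => hd1 (a k)
  have hρa : ∀ k, ∀ i < en k, ρ k i = τ i := fun k => hd2 (a k)
  -- Lengths large enough for convergence along each selected branch.
  have hev : ∀ k, ∃ N, ∀ n ≥ N, 1 / 2 < F (ρ k) (T (x (seg (ρ k) n))) := by
    intro k
    exact eventually_atTop.mp
      ((hF (ρ k)).eventually (eventually_gt_nhds (by norm_num : (1 : ℝ) / 2 < 1)))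
  choose N hN using hev
  set m : ℕ → ℕ := fun k => max (N k) (en k + 1) with hmdef
  set t : ℕ → List Bool := fun k => seg (ρ k) (m k) with htdef
  have hlen : ∀ k, en k < m k := fun k => lt_of_lt_of_le (Nat.lt_succ_self _) (le_max_right _ _)
  -- Pairwise incomparability.
  have hdiff : ∀ {i j : ℕ}, i < j → ρ i (en i) ≠ ρ j (en i) := by
    intro i j hij
    rw [hρa j (en i) (hemono hij)]
    exact hρd i
  have hpw : Pairwise fun i j => Incomp (t i) (t j) := by
    intro i j hij
    rcases hij.lt_or_gt with h | h
    · exact incomp_of_ne (hdiff h) (hlen i) (lt_trans (hemono h) (hlen j))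
    · have := incomp_of_ne (hdiff h) (hlen j) (lt_trans (hemono h) (hlen i))
      exact ⟨this.2, this.1⟩
  have hinj : Function.Injective t := by
    intro i j hij
    by_contra hne
    exact (hpw hne).1 (by rw [hij])
  -- The fixed functional.
  have hlim0 := hanti t hinj hpw (F (ρ 0))
  -- Lower bound on |F (ρ 0) (T (x (t k)))|.
  have h2εC : 2 * ε * C ≤ 1 / 4 := by
    have hpos : (0 : ℝ) < 8 * (C + 1) := by positivity
    rw [hεdef, mul_one_div, div_mul_eq_mul_div, div_le_div_iff₀ hpos (by norm_num)]
    nlinarith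
  have hbound : ∀ k, (1 : ℝ) / 4 ≤ |F (ρ 0) (T (x (t k)))| := by
    intro k
    have h1 : 1 / 2 < F (ρ k) (T (x (t k))) := hN k (m k) (le_max_left _ _)
    have hdist : ‖(F (ρ 0)).comp T - (F (ρ k)).comp T‖ ≤ 2 * ε := by
      have hgr : G (ρ 0) = g := hρS 0
      have hgk : G (ρ k) = g := hρS k
      calc ‖(F (ρ 0)).comp T - (F (ρ k)).comp T‖
          ≤ ‖(F (ρ 0)).comp T - g‖ + ‖g - (F (ρ k)).comp T‖ := norm_sub_le_norm_sub_add_norm_sub _ _ _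
        _ ≤ ε + ε := by
            apply add_le_add
            · have := hGd (ρ 0); rw [hgr] at this; exact this.le
            · have := hGd (ρ k); rw [hgk] at this
              rw [norm_sub_rev]; exact this.le
        _ = 2 * ε := by ring
    have h2 : |F (ρ 0) (T (x (t k))) - F (ρ k) (T (x (t k)))| ≤ 2 * ε * C := by
      have heq : F (ρ 0) (T (x (t k))) - F (ρ k) (T (x (t k)))
          = ((F (ρ 0)).comp T - (F (ρ k)).comp T) (x (t k)) := by
        simp [ContinuousLinearMap.sub_apply, ContinuousLinearMap.comp_apply]
      rw [heq, ← Real.norm_eq_abs]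
      calc ‖((F (ρ 0)).comp T - (F (ρ k)).comp T) (x (t k))‖
          ≤ ‖(F (ρ 0)).comp T - (F (ρ k)).comp T‖ * ‖x (t k)‖ :=
            ContinuousLinearMap.le_opNorm _ _
        _ ≤ 2 * ε * C := mul_le_mul hdist (hC _) (norm_nonneg _) (by positivity)
    have h3 := le_abs_self (F (ρ 0) (T (x (t k))))
    have h4 := neg_abs_le (F (ρ 0) (T (x (t k))) - F (ρ k) (T (x (t k))))
    linarith
  have hsmall : ∀ᶠ k in atTop, |F (ρ 0) (T (x (t k)))| < 1 / 4 := by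
    have habs : Tendsto (fun k => |F (ρ 0) (T (x (t k)))|) atTop (𝓝 0) := by
      have := hlim0.abs
      rwa [abs_zero] at this
    exact habs.eventually (eventually_lt_nhds (by norm_num : (0 : ℝ) < 1 / 4))
  obtain ⟨k, hk⟩ := hsmall.exists
  exact absurd (hbound k) (not_le.mpr hk)
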